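/- Let W ∈ ℝ^{n×n} be symmetric and B ∈ ℝ^{n×d}. Let m, M ∈ ℝ be such that m ≤ −Tr(Xᵀ·W·X + 2·Xᵀ·B·Y) ≤ M for all clustering matrices X ∈ 𝕂_{n×d} and Y ∈ 𝕂_{d×d}. Let κ ∈ ℝ satisfy m + κ > M, and set U ∈ ℝ^{d×d} with U_{ij} = −κ for i ≠ j and U_{ii} = 0. If X ∈ 𝕂_{n×d} and Y ∈ 𝕂_{d×d} are such that the (n+d)×d block clustering matrix [X; Y] encodes a d-clustering of minimal d-cut value with respect to [[W, B],[Bᵀ, U]] among all clustering matrices in 𝕂_{(n+d)×d}, then Y is a permutation matrix. -/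

import Mathlib

open Matrix BigOperators

/-- A clustering matrix: every row is a standard basis vector of `ℝᵈ`. -/
def IsClusteringMatrix {ι : Type*} {d : ℕ} (X : Matrix ι (Fin d) ℝ) : Prop :=
  ∀ i, ∃ j, ∀ k, X i k = if k = j then 1 else 0

/-- The `k`-th cluster encoded by a clustering matrix: `c_k = {i : Z i k = 1}`. -/
noncomputable def clusterOf {ι : Type*} {d : ℕ} [Fintype ι]
    (Z : Matrix ι (Fin d) ℝ) (k : Fin d) : Finset ι :=
  Finset.univ.filter fun i => Z i k = 1

/-- The d-cut value `C_A(c_1,…,c_d) = Σ_{k≠l} Σ_{i∈c_k} Σ_{j∈c_l} A i j`. -/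
noncomputable def cutValue {ι : Type*} {d : ℕ} [Fintype ι]
    (A : Matrix ι ι ℝ) (c : Fin d → Finset ι) : ℝ :=
  ∑ k : Fin d, ∑ l : Fin d, if l = k then 0 else ∑ i ∈ c k, ∑ j ∈ c l, A i j

lemma cutValue_eq_sub {ι : Type*} [Fintype ι] {d : ℕ}
    (A : Matrix ι ι ℝ) (Z : Matrix ι (Fin d) ℝ) (f : ι → Fin d)
    (hf : ∀ i k, Z i k = if k = f i then 1 else 0) :
    cutValue A (clusterOf Z) =
      (∑ i, ∑ j, A i j) - ∑ i, ∑ j, if f j = f i then A i j else 0 := by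
  have hc : ∀ k, clusterOf Z k = Finset.univ.filter (fun i => f i = k) := by
    intro k
    ext i
    simp only [clusterOf, Finset.mem_filter, Finset.mem_univ, true_and, hf i k]
    constructor
    · intro h
      split_ifs at h with h'
      · exact h'.symm
      · norm_num at h
    · rintro rfl; simp
  set T : Fin d → Fin d → ℝ := fun k l =>
    ∑ i, if f i = k then (∑ j, if f j = l then A i j else 0) else 0 with hT
  have hcut : cutValue A (clusterOf Z) = ∑ k, ∑ l, if l = k then 0 else T k l := by
    unfold cutValue
    simp only [hc, Finset.sum_filter, hT]
  rw [hcut]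
  have step1 : ∀ k, (∑ l, if l = k then 0 else T k l) = (∑ l, T k l) - T k k := by
    intro k
    have : ∀ l, (if l = k then 0 else T k l) = T k l - (if l = k then T k l else 0) := by
      intro l; split_ifs <;> ring
    simp only [this, Finset.sum_sub_distrib, Finset.sum_ite_eq', Finset.mem_univ, if_true]
  simp only [step1, Finset.sum_sub_distrib]
  congr 1
  · -- ∑ k, ∑ l, T k l = ∑ i, ∑ j, A i j
    rw [Finset.sum_comm]
    have : ∀ l, (∑ k, T k l) = ∑ i, ∑ j, if f j = l then A i j else 0 := by
      intro l
      rw [hT, Finset.sum_comm]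
      simp [Finset.sum_ite_eq]
    simp only [this]
    rw [Finset.sum_comm]
    refine Finset.sum_congr rfl fun i _ => ?_
    rw [Finset.sum_comm]
    simp [Finset.sum_ite_eq]
  · -- ∑ k, T k k = ∑ i, ∑ j, if f j = f i then A i j else 0
    rw [hT, Finset.sum_comm]
    simp [Finset.sum_ite_eq]

lemma trace_conj {n m' d : ℕ} (A : Matrix (Fin n) (Fin m') ℝ)
    (X : Matrix (Fin n) (Fin d) ℝ) (Y : Matrix (Fin m') (Fin d) ℝ)
    (f : Fin n → Fin d) (g : Fin m' → Fin d)
    (hf : ∀ i k, X i k = if k = f i then 1 else 0)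
    (hg : ∀ j k, Y j k = if k = g j then 1 else 0) :
    (Xᵀ * A * Y).trace = ∑ i, ∑ j, if g j = f i then A i j else 0 := by
  simp only [Matrix.trace, Matrix.diag_apply, Matrix.mul_apply, Matrix.transpose_apply, hf, hg,
    ite_mul, one_mul, zero_mul, mul_ite, mul_one, mul_zero]
  rw [Finset.sum_comm]
  simp only [Finset.sum_ite_eq', Finset.mem_univ, if_true]
  rw [Finset.sum_comm]

/-- If `[X; Y]` encodes a minimal-cut clustering of `G(W, B, U)` with `U` having
sufficiently negative off-diagonal entries, then `Y` is a permutation matrix. -/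
theorem bottom_block_of_min_cut_is_permutation {n d : ℕ}
    (W : Matrix (Fin n) (Fin n) ℝ) (hW : W.IsSymm)
    (B : Matrix (Fin n) (Fin d) ℝ) (m M : ℝ)
    (hm : ∀ (X : Matrix (Fin n) (Fin d) ℝ) (Y : Matrix (Fin d) (Fin d) ℝ),
      IsClusteringMatrix X → IsClusteringMatrix Y →
      m ≤ -(Xᵀ * W * X + (2 : ℝ) • (Xᵀ * B * Y)).trace)
    (hM : ∀ (X : Matrix (Fin n) (Fin d) ℝ) (Y : Matrix (Fin d) (Fin d) ℝ),
      IsClusteringMatrix X → IsClusteringMatrix Y →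
      -(Xᵀ * W * X + (2 : ℝ) • (Xᵀ * B * Y)).trace ≤ M)
    (κ : ℝ) (hκ : M < m + κ)
    (U : Matrix (Fin d) (Fin d) ℝ)
    (hUoff : ∀ i j, i ≠ j → U i j = -κ) (hUdiag : ∀ i, U i i = 0)
    (X : Matrix (Fin n) (Fin d) ℝ) (Y : Matrix (Fin d) (Fin d) ℝ)
    (hX : IsClusteringMatrix X) (hY : IsClusteringMatrix Y)
    (hmin : ∀ Z : Matrix (Fin n ⊕ Fin d) (Fin d) ℝ, IsClusteringMatrix Z →
      cutValue (Matrix.fromBlocks W B Bᵀ U) (clusterOf (Matrix.fromRows X Y)) ≤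
        cutValue (Matrix.fromBlocks W B Bᵀ U) (clusterOf Z)) :
    ∃ σ : Equiv.Perm (Fin d), ∀ i j, Y i j = if σ i = j then 1 else 0 := by
  classical
  choose fX hfX using hX
  choose fY hfY using hY
  have hXc : IsClusteringMatrix X := fun i => ⟨fX i, hfX i⟩
  have hYc : IsClusteringMatrix Y := fun i => ⟨fY i, hfY i⟩
  set A := Matrix.fromBlocks W B Bᵀ U with hA
  -- assignment of stacked matrices
  have hZf : ∀ (g : Fin d → Fin d) (Yg : Matrix (Fin d) (Fin d) ℝ),
      (∀ i k, Yg i k = if k = g i then 1 else 0) →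
      ∀ (p : Fin n ⊕ Fin d) (k : Fin d),
        Matrix.fromRows X Yg p k = if k = Sum.elim fX g p then 1 else 0 := by
    intro g Yg hg p k
    cases p with
    | inl i => rw [Matrix.fromRows_apply_inl, Sum.elim_inl]; exact hfX i k
    | inr i => rw [Matrix.fromRows_apply_inr, Sum.elim_inr]; exact hg i k
  -- splitting the "same cluster" sum into blocks
  have hsplit : ∀ g : Fin d → Fin d,
      (∑ p : Fin n ⊕ Fin d, ∑ q : Fin n ⊕ Fin d,
        if Sum.elim fX g q = Sum.elim fX g p then A p q else 0)
      = (∑ i, ∑ j, if fX j = fX i then W i j else 0)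
        + 2 * (∑ i, ∑ j, if g j = fX i then B i j else 0)
        + (∑ i, ∑ j, if g j = g i then U i j else 0) := by
    intro g
    rw [Fintype.sum_sum_type]
    simp only [Fintype.sum_sum_type, Sum.elim_inl, Sum.elim_inr, hA,
      Matrix.fromBlocks_apply₁₁, Matrix.fromBlocks_apply₁₂,
      Matrix.fromBlocks_apply₂₁, Matrix.fromBlocks_apply₂₂, Matrix.transpose_apply]
    rw [Finset.sum_add_distrib, Finset.sum_add_distrib]
    have hswap : (∑ i : Fin d, ∑ j : Fin n, if fX j = g i then B j i else 0)
        = ∑ i : Fin n, ∑ j : Fin d, if g j = fX i then B i j else 0 := by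
      rw [Finset.sum_comm]
      refine Finset.sum_congr rfl fun i _ => Finset.sum_congr rfl fun j _ => ?_
      exact if_congr eq_comm rfl rfl
    have key : ((∑ x, ∑ a₁, if fX a₁ = fX x then W x a₁ else 0) + ∑ x, ∑ a₂, if g a₂ = fX x then B x a₂ else 0) +
        ((∑ x, ∑ a₁, if fX a₁ = g x then B a₁ x else 0) + ∑ x, ∑ a₂, if g a₂ = g x then U x a₂ else 0) =
        ((∑ i, ∑ j, if fX j = fX i then W i j else 0) + 2 * ∑ i, ∑ j, if g j = fX i then B i j else 0) +
        ∑ i, ∑ j, if g j = g i then U i j else 0 := by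
      rw [hswap]; ring
    convert key using 6 <;> exact if_congr Iff.rfl rfl rfl
  -- trace formula
  have htr : ∀ (g : Fin d → Fin d) (Yg : Matrix (Fin d) (Fin d) ℝ),
      (∀ i k, Yg i k = if k = g i then 1 else 0) →
      (Xᵀ * W * X + (2 : ℝ) • (Xᵀ * B * Yg)).trace
        = (∑ i, ∑ j, if fX j = fX i then W i j else 0)
          + 2 * (∑ i, ∑ j, if g j = fX i then B i j else 0) := by
    intro g Yg hg
    rw [Matrix.trace_add, Matrix.trace_smul, trace_conj W X X fX fX hfX hfX,
      trace_conj B X Yg fX g hfX hg, smul_eq_mul]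
  -- the identity clustering matrix
  have hid : ∀ (i k : Fin d), (1 : Matrix (Fin d) (Fin d) ℝ) i k = if k = i then 1 else 0 := by
    intro i k
    simp [Matrix.one_apply, eq_comm]
  have h1c : IsClusteringMatrix (1 : Matrix (Fin d) (Fin d) ℝ) := fun i => ⟨i, hid i⟩
  have hZ'c : IsClusteringMatrix (Matrix.fromRows X (1 : Matrix (Fin d) (Fin d) ℝ)) :=
    fun p => ⟨Sum.elim fX id p, fun k => hZf id 1 hid p k⟩
  have hinj : Function.Injective fY := by
    intro a b hab
    by_contra hne
    have hmM : m ≤ M := le_trans (hm X Y hXc hYc) (hM X Y hXc hYc)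
    have hκ0 : 0 < κ := by linarith
    have e1 := cutValue_eq_sub A (Matrix.fromRows X Y) (Sum.elim fX fY) (hZf fY Y hfY)
    have e2 := cutValue_eq_sub A (Matrix.fromRows X 1) (Sum.elim fX id) (hZf id 1 hid)
    have hmin' := hmin (Matrix.fromRows X (1 : Matrix (Fin d) (Fin d) ℝ)) hZ'c
    rw [e1, e2, hsplit fY, hsplit id] at hmin'
    have hU0 : (∑ i, ∑ j, if id j = id i then U i j else 0) = 0 := by
      simp only [id_eq]
      simp [Finset.sum_ite_eq', hUdiag]
    have hUneg : (∑ i, ∑ j, if fY j = fY i then U i j else 0) ≤ -κ := by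
      have hle : ∀ i : Fin d, (∑ j, if fY j = fY i then U i j else 0)
          ≤ (if i = a then -κ else 0) := by
        intro i
        by_cases hia : i = a
        · subst hia
          rw [if_pos rfl]
          calc (∑ j, if fY j = fY i then U i j else 0)
              ≤ ∑ j, (if j = b then -κ else 0) := by
                apply Finset.sum_le_sum
                intro j _
                by_cases hjb : j = b
                · subst hjb
                  rw [if_pos rfl, if_pos hab.symm, hUoff i j hne]
                · rw [if_neg hjb]
                  split_ifs with hfy
                  · by_cases hij : i = j
                    · subst hij; simp [hUdiag]
                    · rw [hUoff i j hij]; linarith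
                  · exact le_rfl
            _ = -κ := by simp [Finset.sum_ite_eq']
        · rw [if_neg hia]
          apply Finset.sum_nonpos
          intro j _
          split_ifs with hfy
          · by_cases hij : i = j
            · subst hij; simp [hUdiag]
            · rw [hUoff i j hij]; linarith
          · exact le_rfl
      calc (∑ i, ∑ j, if fY j = fY i then U i j else 0)
          ≤ ∑ i, (if i = a then -κ else 0) := Finset.sum_le_sum fun i _ => hle i
        _ = -κ := by simp [Finset.sum_ite_eq']
    have hb1 := hm X Y hXc hYc
    have hb2 := hM X (1 : Matrix (Fin d) (Fin d) ℝ) hXc h1c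
    rw [htr fY Y hfY] at hb1
    rw [htr id 1 hid] at hb2
    linarith
  have hbij : Function.Bijective fY := Finite.injective_iff_bijective.mp hinj
  refine ⟨Equiv.ofBijective fY hbij, fun i j => ?_⟩
  rw [hfY i j]
  simp only [Equiv.ofBijective_apply]
  exact if_congr eq_comm rfl rfl
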